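/- ('Going-up' for differential ideals.) Let f : A → B be a differential homomorphism of Keigher rings such that B is integral over f(A). Then f has the going-up property for prime differential ideals: whenever 𝔭 ⊆ 𝔭' are prime differential ideals of A and 𝔮 is a prime differential ideal of B with f⁻¹(𝔮) = 𝔭, there exists a prime differential ideal 𝔮' ⊇ 𝔮 of B with f⁻¹(𝔮') = 𝔭'. -/

import Mathlib

/-!
Common differential-algebra preamble.

A differential ring is a commutative ring `R` equipped with a family of derivations
`δ : ι → Derivation ℤ R R`.  Induced derivations on quotients by differential ideals
and on localizations are unique (the canonical map is an epimorphism), which justifies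
quantifying universally over derivation families commuting with the canonical map.
-/

universe u v

section Preamble

variable {ι : Type*}

/-- An ideal is a *differential ideal* with respect to a family of derivations. -/
def IsDiffIdeal {R : Type*} [CommRing R] (δ : ι → Derivation ℤ R R) (I : Ideal R) : Prop :=
  ∀ i : ι, ∀ x ∈ I, δ i x ∈ I

/-- A *Keigher ring*: the radical of any differential ideal is again differential. -/
def IsKeigher {R : Type*} [CommRing R] (δ : ι → Derivation ℤ R R) : Prop :=
  ∀ I : Ideal R, IsDiffIdeal δ I → IsDiffIdeal δ I.radical

/-- A ring homomorphism is a *differential homomorphism* if it commutes with the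
derivations. -/
def IsDiffHom {A B : Type*} [CommRing A] [CommRing B]
    (δA : ι → Derivation ℤ A A) (δB : ι → Derivation ℤ B B) (f : A →+* B) : Prop :=
  ∀ (i : ι) (a : A), f (δA i a) = δB i (f a)

theorem IsDiffHom.comp {A B C : Type*} [CommRing A] [CommRing B] [CommRing C]
    {δA : ι → Derivation ℤ A A} {δB : ι → Derivation ℤ B B} {δC : ι → Derivation ℤ C C}
    {f : A →+* B} {g : B →+* C} (hf : IsDiffHom δA δB f) (hg : IsDiffHom δB δC g) :
    IsDiffHom δA δC (g.comp f) := fun i a => by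
  simp only [RingHom.comp_apply, hf i a, hg i (f a)]

/-- Iterated application of the derivations along a list of indices. -/
def derivApply {B : Type*} [CommRing B] (δ : ι → Derivation ℤ B B) : List ι → B → B
  | [], b => b
  | i :: l, b => δ i (derivApply δ l b)

/-- `B` is *differentially finitely generated* over `A`: finitely many elements whose
iterated derivatives generate `B` as an `A`-algebra. -/
def IsDiffFG (A : Type*) {B : Type*} [CommRing A] [CommRing B] [Algebra A B]
    (δ : ι → Derivation ℤ B B) : Prop :=
  ∃ s : Finset B,
    Algebra.adjoin A {x : B | ∃ b ∈ s, ∃ l : List ι, derivApply δ l b = x} = ⊤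

/-- A differential ring is *differentially simple* if it is nonzero and its only
differential ideals are `⊥` and `⊤`. -/
def IsDiffSimple {R : Type*} [CommRing R] (δ : ι → Derivation ℤ R R) : Prop :=
  Nontrivial R ∧ ∀ I : Ideal R, IsDiffIdeal δ I → I = ⊥ ∨ I = ⊤

/-- The differential spectrum `Spec^Δ`, as a subspace of the prime spectrum. -/
def DiffSpec {R : Type*} [CommRing R] (δ : ι → Derivation ℤ R R) : Type _ :=
  {p : PrimeSpectrum R // IsDiffIdeal δ p.asIdeal}

instance {R : Type*} [CommRing R] (δ : ι → Derivation ℤ R R) :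
    TopologicalSpace (DiffSpec δ) :=
  inferInstanceAs (TopologicalSpace {p : PrimeSpectrum R // IsDiffIdeal δ p.asIdeal})

/-- The contraction map `f*_Δ : Spec^Δ B → Spec^Δ A` induced by a differential
homomorphism. -/
def diffComap {A B : Type*} [CommRing A] [CommRing B]
    {δA : ι → Derivation ℤ A A} {δB : ι → Derivation ℤ B B} {f : A →+* B}
    (hf : IsDiffHom δA δB f) (q : DiffSpec δB) : DiffSpec δA :=
  ⟨PrimeSpectrum.comap f q.1, fun i x hx => by
    have h : f x ∈ q.1.asIdeal := hx
    have hd := q.2 i (f x) h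
    show f (δA i x) ∈ q.1.asIdeal
    rw [hf i x]
    exact hd⟩

/-- Going-up property for prime ideals. -/
def HasGoingUp {A B : Type*} [CommRing A] [CommRing B] (f : A →+* B) : Prop :=
  ∀ p p' : Ideal A, p.IsPrime → p'.IsPrime → p ≤ p' →
    ∀ q : Ideal B, q.IsPrime → q.comap f = p →
      ∃ q' : Ideal B, q'.IsPrime ∧ q ≤ q' ∧ q'.comap f = p'

/-- Going-down property for prime ideals. -/
def HasGoingDown {A B : Type*} [CommRing A] [CommRing B] (f : A →+* B) : Prop :=
  ∀ p p' : Ideal A, p.IsPrime → p'.IsPrime → p' ≤ p →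
    ∀ q : Ideal B, q.IsPrime → q.comap f = p →
      ∃ q' : Ideal B, q'.IsPrime ∧ q' ≤ q ∧ q'.comap f = p'

/-- Going-up property for prime differential ideals. -/
def HasGoingUpDiff {A B : Type*} [CommRing A] [CommRing B]
    (δA : ι → Derivation ℤ A A) (δB : ι → Derivation ℤ B B) (f : A →+* B) : Prop :=
  ∀ p p' : Ideal A, p.IsPrime → IsDiffIdeal δA p → p'.IsPrime → IsDiffIdeal δA p' → p ≤ p' →
    ∀ q : Ideal B, q.IsPrime → IsDiffIdeal δB q → q.comap f = p →
      ∃ q' : Ideal B, q'.IsPrime ∧ IsDiffIdeal δB q' ∧ q ≤ q' ∧ q'.comap f = p'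

/-- Going-down property for prime differential ideals. -/
def HasGoingDownDiff {A B : Type*} [CommRing A] [CommRing B]
    (δA : ι → Derivation ℤ A A) (δB : ι → Derivation ℤ B B) (f : A →+* B) : Prop :=
  ∀ p p' : Ideal A, p.IsPrime → IsDiffIdeal δA p → p'.IsPrime → IsDiffIdeal δA p' → p' ≤ p →
    ∀ q : Ideal B, q.IsPrime → IsDiffIdeal δB q → q.comap f = p →
      ∃ q' : Ideal B, q'.IsPrime ∧ IsDiffIdeal δB q' ∧ q' ≤ q ∧ q'.comap f = p'

/-- Constructible subsets of a topological space: finite unions of sets of the form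
(open ∩ closed). -/
def IsConstructibleSet {X : Type*} [TopologicalSpace X] (E : Set X) : Prop :=
  ∃ S : Finset (Set X × Set X), (∀ p ∈ S, IsOpen p.1 ∧ IsClosed p.2) ∧
    E = ⋃ p ∈ S, p.1 ∩ p.2

/-- Membership in `SMax^Δ R`: `p` is a prime differential ideal such that the
localization `(R/p)_s` is differentially simple for some `s ∉ p`.  The quotient and
localization are taken with their (unique) induced derivations, hence the universal
quantification over derivation families commuting with the canonical maps. -/
def InSMax {R : Type u} [CommRing R] (δ : ι → Derivation ℤ R R) (p : Ideal R) : Prop :=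
  p.IsPrime ∧ IsDiffIdeal δ p ∧
  ∃ s : R, s ∉ p ∧
    ∀ δq : ι → Derivation ℤ (R ⧸ p) (R ⧸ p),
      IsDiffHom δ δq (Ideal.Quotient.mk p) →
      ∀ (L : Type u) [CommRing L] [Algebra (R ⧸ p) L],
        IsLocalization.Away (Ideal.Quotient.mk p s) L →
        ∀ δl : ι → Derivation ℤ L L,
          IsDiffHom δq δl (algebraMap (R ⧸ p) L) → IsDiffSimple δl

end Preamble

section Helpers
variable {ι B : Type*} [CommRing B] {δ : ι → Derivation ℤ B B}

lemma isDiffIdeal_span' {S : Set B} (h : ∀ i, ∀ s ∈ S, δ i s ∈ Ideal.span S) :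
    IsDiffIdeal δ (Ideal.span S) := by
  intro i x hx
  induction hx using Submodule.span_induction with
  | mem x hxS => exact h i x hxS
  | zero => simp
  | add x y hx hy ihx ihy => rw [map_add]; exact Ideal.add_mem _ ihx ihy
  | smul c x hx ih =>
      have : δ i (c • x) = c * δ i x + x * δ i c := by
        rw [smul_eq_mul, Derivation.leibniz, smul_eq_mul, smul_eq_mul]
      rw [this]
      exact Ideal.add_mem _ (Ideal.mul_mem_left _ _ ih) (Ideal.mul_mem_right _ _ hx)

lemma isDiffIdeal_sup {I J : Ideal B} (hI : IsDiffIdeal δ I) (hJ : IsDiffIdeal δ J) :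
    IsDiffIdeal δ (I ⊔ J) := by
  intro i x hx
  obtain ⟨y, hy, z, hz, rfl⟩ := Submodule.mem_sup.mp hx
  rw [map_add]
  exact Submodule.add_mem _ (Ideal.mem_sup_left (hI i y hy)) (Ideal.mem_sup_right (hJ i z hz))

lemma keigher_mul {J : Ideal B} (hrad : J.radical = J) (hdiff : IsDiffIdeal δ J)
    {a b : B} (hab : a * b ∈ J) (i : ι) : a * δ i b ∈ J := by
  have h1 : a * δ i b + b * δ i a ∈ J := by
    have := hdiff i _ hab
    rwa [Derivation.leibniz, smul_eq_mul, smul_eq_mul] at this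
  have h2 : (a * δ i b) ^ 2 ∈ J := by
    have heq : (a * δ i b) ^ 2 =
        (a * δ i b) * (a * δ i b + b * δ i a) - (a * b) * (δ i a * δ i b) := by ring
    rw [heq]
    exact Ideal.sub_mem _ (Ideal.mul_mem_left _ _ h1) (Ideal.mul_mem_right _ _ hab)
  have : a * δ i b ∈ J.radical := ⟨2, h2⟩
  rwa [hrad] at this

lemma colon_radical {J : Ideal B} (hrad : J.radical = J) (b : B) :
    (J.colon (Ideal.span {b})).radical = J.colon (Ideal.span {b}) := by
  refine le_antisymm ?_ Ideal.le_radical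
  intro y hy
  obtain ⟨n, hn⟩ := hy
  rw [Ideal.mem_colon_span_singleton] at hn ⊢
  have : (y * b) ^ (n + 1) ∈ J := by
    have heq : (y * b) ^ (n + 1) = (y ^ n * b) * (y * b ^ n) := by ring
    rw [heq]
    exact Ideal.mul_mem_right _ _ hn
  have : y * b ∈ J.radical := ⟨n + 1, this⟩
  rwa [hrad] at this

lemma colon_diff {J : Ideal B} (hrad : J.radical = J) (hdiff : IsDiffIdeal δ J) (b : B) :
    IsDiffIdeal δ (J.colon (Ideal.span {b})) := by
  intro i x hx
  rw [Ideal.mem_colon_span_singleton] at hx ⊢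
  have := keigher_mul hrad hdiff (a := b) (b := x) (by rwa [mul_comm]) i
  rwa [mul_comm]

/-- The radical of the differential ideal generated by `J` and `a`. -/
def diffRadGen (δ : ι → Derivation ℤ B B) (J : Ideal B) (a : B) : Ideal B :=
  (J ⊔ Ideal.span {y | ∃ l : List ι, derivApply δ l a = y}).radical

lemma diffRadGen_diff (hK : IsKeigher δ) {J : Ideal B} (hJ : IsDiffIdeal δ J) (a : B) :
    IsDiffIdeal δ (diffRadGen δ J a) := by
  refine hK _ (isDiffIdeal_sup hJ (isDiffIdeal_span' ?_))
  rintro i s ⟨l, rfl⟩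
  exact Ideal.subset_span ⟨i :: l, rfl⟩

lemma le_diffRadGen {J : Ideal B} (a : B) : J ≤ diffRadGen δ J a :=
  le_trans le_sup_left Ideal.le_radical

lemma mem_diffRadGen {J : Ideal B} (a : B) : a ∈ diffRadGen δ J a :=
  Ideal.le_radical (Ideal.mem_sup_right (Ideal.subset_span ⟨[], rfl⟩))

lemma diffRadGen_le {J C : Ideal B} (hCrad : C.radical = C) (hCdiff : IsDiffIdeal δ C)
    (hJC : J ≤ C) {a : B} (ha : a ∈ C) : diffRadGen δ J a ≤ C := by
  have hspan : Ideal.span {y | ∃ l : List ι, derivApply δ l a = y} ≤ C := by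
    rw [Ideal.span_le]
    rintro y ⟨l, rfl⟩
    induction l with
    | nil => exact ha
    | cons i l ih => exact hCdiff i _ ih
  calc diffRadGen δ J a ≤ C.radical := Ideal.radical_mono (sup_le hJC hspan)
    _ = C := hCrad

end Helpers

/-- "going-up" for differential ideals.  If `f : A → B` is a
differential homomorphism of Keigher rings with `B` integral over `f(A)`, then `f` has
the going-up property for prime differential ideals. -/
theorem stmt4 {ι A B : Type*} [CommRing A] [CommRing B]
    (δA : ι → Derivation ℤ A A) (δB : ι → Derivation ℤ B B)
    (hKA : IsKeigher δA) (hKB : IsKeigher δB)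
    (f : A →+* B) (hf : IsDiffHom δA δB f)
    (hint : f.IsIntegral) :
    HasGoingUpDiff δA δB f := by
  intro p p' hp hpd hp' hp'd hpp' q hq hqd hqp
  -- classical going-up
  letI : Algebra A B := f.toAlgebra
  haveI : Algebra.IsIntegral A B := Algebra.isIntegral_def.mpr hint
  haveI := hp'
  obtain ⟨q₀, hq₀ge, hq₀prime, hq₀comap⟩ :=
    Ideal.exists_ideal_over_prime_of_isIntegral p' q
      (by rw [show algebraMap A B = f from rfl, hqp]; exact hpp')
  have hq₀comap' : q₀.comap f = p' := hq₀comap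
  -- the starting differential ideal
  set S0 : Ideal B := q ⊔ Ideal.span (f '' (p' : Set A)) with hS0def
  have hS0diff : IsDiffIdeal δB S0 := by
    refine isDiffIdeal_sup hqd (isDiffIdeal_span' ?_)
    rintro i s ⟨x, hx, rfl⟩
    rw [show δB i (f x) = f (δA i x) from (hf i x).symm]
    exact Ideal.subset_span ⟨δA i x, hp'd i x hx, rfl⟩
  set I₀ : Ideal B := S0.radical with hI₀def
  have hI₀diff : IsDiffIdeal δB I₀ := hKB _ hS0diff
  have hspanle : Ideal.span (f '' (p' : Set A)) ≤ q₀ := by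
    rw [Ideal.span_le]
    rintro y ⟨x, hx, rfl⟩
    have : x ∈ q₀.comap f := hq₀comap' ▸ hx
    exact this
  have hI₀q₀ : I₀ ≤ q₀ := by
    calc I₀ ≤ q₀.radical := Ideal.radical_mono (sup_le hq₀ge hspanle)
      _ = q₀ := hq₀prime.radical
  -- the Zorn setup
  set T : Set (Ideal B) := {J | IsDiffIdeal δB J ∧ I₀ ≤ J ∧ ∀ a : A, a ∉ p' → f a ∉ J} with hTdef
  have hI₀T : I₀ ∈ T := by
    refine ⟨hI₀diff, le_rfl, fun a ha hfa => ha ?_⟩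
    have : f a ∈ q₀ := hI₀q₀ hfa
    rw [← hq₀comap']; exact this
  obtain ⟨m, hI₀m, hmT, hmax⟩ := zorn_le_nonempty₀ T (fun c hcT hc y hy => by
    refine ⟨sSup c, ⟨?_, ?_, ?_⟩, fun z hz => le_sSup hz⟩
    · intro i x hx
      obtain ⟨J, hJ, hxJ⟩ := (Submodule.mem_sSup_of_directed ⟨y, hy⟩ hc.directedOn).mp hx
      exact le_sSup hJ ((hcT hJ).1 i x hxJ)
    · exact le_trans (hcT hy).2.1 (le_sSup hy)
    · intro a ha hfa
      obtain ⟨J, hJ, hxJ⟩ := (Submodule.mem_sSup_of_directed ⟨y, hy⟩ hc.directedOn).mp hfa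
      exact (hcT hJ).2.2 a ha hxJ) I₀ hI₀T
  obtain ⟨hmdiff, hI₀m', havoid⟩ := hmT
  have hmax' : ∀ J ∈ T, m ≤ J → J = m := fun J hJ hle => le_antisymm (hmax hJ hle) hle
  -- m is radical
  have hmrad : m.radical = m := by
    refine hmax' _ ⟨hKB m hmdiff, le_trans hI₀m' Ideal.le_radical, ?_⟩ Ideal.le_radical
    intro a ha hfa
    obtain ⟨n, hn⟩ := hfa
    rw [← map_pow] at hn
    exact havoid (a ^ n) (fun h => ha (hp'.mem_of_pow_mem n h)) hn
  -- m is prime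
  have hmne : m ≠ ⊤ := by
    intro h
    have h1 : (1 : A) ∉ p' := fun h1 => hp'.ne_top (Ideal.eq_top_iff_one _ |>.mpr h1)
    exact havoid 1 h1 (by rw [map_one, h]; exact Submodule.mem_top)
  have hmprime : m.IsPrime := by
    refine ⟨hmne, fun {x y} hxy => ?_⟩
    rw [or_iff_not_imp_left]
    intro hx
    by_contra hy
    -- colon ideal by y
    set Cy := m.colon (Ideal.span {y}) with hCydef
    have hmCy : m ≤ Cy := fun j hj =>
      Ideal.mem_colon_span_singleton.mpr (Ideal.mul_mem_right _ _ hj)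
    have hKx : diffRadGen δB m x ≤ Cy :=
      diffRadGen_le (colon_radical hmrad y) (colon_diff hmrad hmdiff y) hmCy
        (Ideal.mem_colon_span_singleton.mpr hxy)
    -- diffRadGen m x cannot avoid S
    have hKxT : diffRadGen δB m x ∉ T := by
      intro hmem
      exact hx (hmax' _ hmem (le_diffRadGen x) ▸ mem_diffRadGen x)
    have : ∃ s : A, s ∉ p' ∧ f s ∈ diffRadGen δB m x := by
      by_contra hcon
      push_neg at hcon
      exact hKxT ⟨diffRadGen_diff hKB hmdiff x,
        le_trans hI₀m' (le_diffRadGen x), fun a ha hfa => hcon a ha hfa⟩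
    obtain ⟨s, hs, hfs⟩ := this
    have hsy : f s * y ∈ m := Ideal.mem_colon_span_singleton.mp (hKx hfs)
    -- colon ideal by f s
    set Cs := m.colon (Ideal.span {f s}) with hCsdef
    have hmCs : m ≤ Cs := fun j hj =>
      Ideal.mem_colon_span_singleton.mpr (Ideal.mul_mem_right _ _ hj)
    have hKy : diffRadGen δB m y ≤ Cs :=
      diffRadGen_le (colon_radical hmrad (f s)) (colon_diff hmrad hmdiff (f s)) hmCs
        (Ideal.mem_colon_span_singleton.mpr (by rwa [mul_comm]))
    have hKyT : diffRadGen δB m y ∉ T := by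
      intro hmem
      exact hy (hmax' _ hmem (le_diffRadGen y) ▸ mem_diffRadGen y)
    have : ∃ t : A, t ∉ p' ∧ f t ∈ diffRadGen δB m y := by
      by_contra hcon
      push_neg at hcon
      exact hKyT ⟨diffRadGen_diff hKB hmdiff y,
        le_trans hI₀m' (le_diffRadGen y), fun a ha hfa => hcon a ha hfa⟩
    obtain ⟨t, ht, hft⟩ := this
    have hts : f t * f s ∈ m := Ideal.mem_colon_span_singleton.mp (hKy hft)
    rw [← map_mul] at hts
    exact havoid (t * s) (fun hmem => (hp'.mem_or_mem hmem).elim ht hs) hts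
  -- conclusion
  refine ⟨m, hmprime, hmdiff, ?_, ?_⟩
  · calc q ≤ S0 := le_sup_left
      _ ≤ I₀ := Ideal.le_radical
      _ ≤ m := hI₀m'
  · refine le_antisymm (fun a ha => ?_) (fun a ha => ?_)
    · by_contra h
      exact havoid a h ha
    · show f a ∈ m
      exact hI₀m' (Ideal.le_radical (Ideal.mem_sup_right (Ideal.subset_span ⟨a, ha, rfl⟩)))
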